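/- Let ℋ be a complex Hilbert space and T ∈ B(ℋ) a contraction (‖T‖ ≤ 1). Then there exists a bounded linear map P : B(ℋ) → B(ℋ) with ‖P‖ ≤ 1, P ∘ P = P, and range of P equal to {C ∈ B(ℋ) : T* C T = C}. -/

import Mathlib

noncomputable section
namespace Stmt6Aux

open Filter BoundedContinuousFunction

/-- shift of a bounded sequence -/
def shiftB {E : Type*} [NormedAddCommGroup E] (u : ℕ →ᵇ E) : ℕ →ᵇ E :=
  u.compContinuous ⟨fun n => n + 1, continuous_of_discreteTopology⟩

@[simp] lemma shiftB_apply {E : Type*} [NormedAddCommGroup E] (u : ℕ →ᵇ E) (n : ℕ) :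
    shiftB u n = u (n + 1) := rfl

/-- Cesàro means -/
def ces (x : ℕ →ᵇ ℝ) (n : ℕ) : ℝ := (∑ i ∈ Finset.range n, x i) / n

lemma abs_ces_le (x : ℕ →ᵇ ℝ) (n : ℕ) : |ces x n| ≤ ‖x‖ := by
  rcases Nat.eq_zero_or_pos n with h | h
  · simp [ces, h, norm_nonneg x]
  · have hb : |∑ i ∈ Finset.range n, x i| ≤ n * ‖x‖ := by
      calc |∑ i ∈ Finset.range n, x i| ≤ ∑ i ∈ Finset.range n, |x i| :=
            Finset.abs_sum_le_sum_abs _ _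
        _ ≤ ∑ _i ∈ Finset.range n, ‖x‖ :=
            Finset.sum_le_sum fun i _ => x.norm_coe_le_norm i
        _ = n * ‖x‖ := by simp [Finset.sum_const, mul_comm]
    have hn : (0:ℝ) < n := by exact_mod_cast h
    rw [ces, abs_div, abs_of_pos hn, div_le_iff₀ hn]
    linarith [hb]

lemma ces_bdd_le (x : ℕ →ᵇ ℝ) : IsBoundedUnder (· ≤ ·) atTop (ces x) :=
  isBoundedUnder_of ⟨‖x‖, fun n => (abs_le.1 (abs_ces_le x n)).2⟩

lemma ces_bdd_ge (x : ℕ →ᵇ ℝ) : IsBoundedUnder (· ≥ ·) atTop (ces x) :=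
  isBoundedUnder_of ⟨-‖x‖, fun n => (abs_le.1 (abs_ces_le x n)).1⟩

/-- sublinear functional -/
def pB (x : ℕ →ᵇ ℝ) : ℝ := limsup (ces x) atTop

lemma pB_le_norm (x : ℕ →ᵇ ℝ) : pB x ≤ ‖x‖ :=
  limsup_le_of_le ((ces_bdd_ge x).isCoboundedUnder_le)
    (Eventually.of_forall fun n => (abs_le.1 (abs_ces_le x n)).2)

lemma ces_add (x y : ℕ →ᵇ ℝ) : ces (x + y) = ces x + ces y := by
  funext n
  simp [ces, Finset.sum_add_distrib, add_div]

lemma pB_add (x y : ℕ →ᵇ ℝ) : pB (x + y) ≤ pB x + pB y := by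
  rw [pB, ces_add]
  exact limsup_add_le (ces_bdd_ge x) (ces_bdd_le x)
    ((ces_bdd_ge y).isCoboundedUnder_le) (ces_bdd_le y)

lemma pB_smul (c : ℝ) (hc : 0 < c) (x : ℕ →ᵇ ℝ) : pB (c • x) = c * pB x := by
  have h : ces (c • x) = fun n => c * ces x n := by
    funext n
    simp only [ces, coe_smul, Pi.smul_apply, smul_eq_mul]
    rw [← Finset.mul_sum, mul_div_assoc]
  have h3 : IsBoundedUnder (· ≤ ·) atTop fun n => (OrderIso.mulLeft₀ c hc) (ces x n) := by
    have := ces_bdd_le (c • x); rwa [h] at this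
  have h4 : IsCoboundedUnder (· ≤ ·) atTop fun n => (OrderIso.mulLeft₀ c hc) (ces x n) := by
    have := (ces_bdd_ge (c • x)).isCoboundedUnder_le; rwa [h] at this
  have := (OrderIso.mulLeft₀ c hc).limsup_apply (u := ces x) (f := atTop)
    (ces_bdd_le x) ((ces_bdd_ge x).isCoboundedUnder_le) h3 h4
  rw [pB, h, pB]; simpa using this.symm


lemma pB_shift_sub (x : ℕ →ᵇ ℝ) : pB (shiftB x - x) ≤ 0 := by
  have hces : ces (shiftB x - x) = fun n => (x n - x 0) / n := by
    funext n
    have : ∑ i ∈ Finset.range n, ((shiftB x - x) i) = x n - x 0 := by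
      simpa using Finset.sum_range_sub (fun i => x i) n
    rw [ces, this]
  have htend : Filter.Tendsto (fun n : ℕ => (x n - x 0) / n) atTop (nhds 0) := by
    apply squeeze_zero_norm (a := fun n : ℕ => (2 * ‖x‖) / n)
    · intro n
      rw [norm_div, Real.norm_natCast]
      rcases Nat.eq_zero_or_pos n with h | h
      · simp [h]
      · have hn : (0:ℝ) < n := by exact_mod_cast h
        rw [div_le_div_iff_of_pos_right hn]
        calc ‖x n - x 0‖ ≤ ‖x n‖ + ‖x 0‖ := norm_sub_le _ _
          _ ≤ ‖x‖ + ‖x‖ := add_le_add (x.norm_coe_le_norm n) (x.norm_coe_le_norm 0)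
          _ = 2 * ‖x‖ := by ring
    · exact tendsto_const_div_atTop_nhds_zero_nat _
  rw [pB, hces, htend.limsup_eq]

lemma pB_const_smul_one (c : ℝ) : pB (c • (1 : ℕ →ᵇ ℝ)) = c := by
  have h : ∀ᶠ n in atTop, ces (c • (1 : ℕ →ᵇ ℝ)) n = c := by
    filter_upwards [eventually_gt_atTop 0] with n hn
    have hn' : (n:ℝ) ≠ 0 := by exact_mod_cast hn.ne'
    simp [ces, mul_div_assoc, hn', mul_comm]
  rw [pB, limsup_congr h, limsup_const]

lemma exists_g : ∃ g : (ℕ →ᵇ ℝ) →ₗ[ℝ] ℝ,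
    (∀ x, g x ≤ pB x) ∧ (∀ c : ℝ, g (c • 1) = c) := by
  have H : ∀ c : ℝ, c • (1 : ℕ →ᵇ ℝ) = 0 → c • (1 : ℝ) = 0 := by
    intro c h
    have := DFunLike.congr_fun h 0
    simpa using this
  set f := LinearPMap.mkSpanSingleton' (σ := RingHom.id ℝ) (1 : ℕ →ᵇ ℝ) (1 : ℝ) H with hf
  have hdom : ∀ z : f.domain, ∃ c : ℝ, c • (1 : ℕ →ᵇ ℝ) = z := by
    intro z
    have h2 : f.domain = (Submodule.span ℝ {(1 : ℕ →ᵇ ℝ)}) :=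
      LinearPMap.domain_mkSpanSingleton _ _ _
    exact Submodule.mem_span_singleton.1 (h2 ▸ z.2)
  have hfle : ∀ z : f.domain, f z ≤ pB z := by
    intro z
    obtain ⟨c, hc⟩ := hdom z
    have hmem : c • (1 : ℕ →ᵇ ℝ) ∈ f.domain := hc ▸ z.2
    have hz : z = ⟨c • (1 : ℕ →ᵇ ℝ), hmem⟩ := Subtype.ext hc.symm
    rw [hz]
    rw [LinearPMap.mkSpanSingleton'_apply]
    simp [pB_const_smul_one]
  obtain ⟨g, hg1, hg2⟩ := exists_extension_of_le_sublinear f pB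
    (fun c hc x => pB_smul c hc x) pB_add hfle
  refine ⟨g, hg2, fun c => ?_⟩
  have hmem : c • (1 : ℕ →ᵇ ℝ) ∈ f.domain := by
    rw [hf, LinearPMap.domain_mkSpanSingleton]
    exact Submodule.mem_span_singleton.2 ⟨c, rfl⟩
  have := hg1 ⟨c • (1 : ℕ →ᵇ ℝ), hmem⟩
  rw [this, LinearPMap.mkSpanSingleton'_apply]
  simp


/-- real part, as a bounded function -/
def reB (u : ℕ →ᵇ ℂ) : ℕ →ᵇ ℝ :=
  ofNormedAddCommGroup (fun n => (u n).re) continuous_of_discreteTopology ‖u‖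
    (fun n => by
      calc ‖(u n).re‖ ≤ ‖u n‖ := Complex.abs_re_le_norm _
        _ = ‖u n‖ := rfl
        _ ≤ ‖u‖ := u.norm_coe_le_norm n)

/-- imaginary part, as a bounded function -/
def imB (u : ℕ →ᵇ ℂ) : ℕ →ᵇ ℝ :=
  ofNormedAddCommGroup (fun n => (u n).im) continuous_of_discreteTopology ‖u‖
    (fun n => by
      calc ‖(u n).im‖ ≤ ‖u n‖ := Complex.abs_im_le_norm _
        _ = ‖u n‖ := rfl
        _ ≤ ‖u‖ := u.norm_coe_le_norm n)

@[simp] lemma reB_apply (u : ℕ →ᵇ ℂ) (n : ℕ) : reB u n = (u n).re := rfl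
@[simp] lemma imB_apply (u : ℕ →ᵇ ℂ) (n : ℕ) : imB u n = (u n).im := rfl

lemma norm_reB_le (u : ℕ →ᵇ ℂ) : ‖reB u‖ ≤ ‖u‖ :=
  norm_ofNormedAddCommGroup_le _ (norm_nonneg u) _

theorem exists_mean : ∃ M : (ℕ →ᵇ ℂ) → ℂ,
    (∀ u v, M (u + v) = M u + M v) ∧
    (∀ (c : ℂ) u, M (c • u) = c * M u) ∧
    (∀ u, ‖M u‖ ≤ ‖u‖) ∧
    (∀ u, M (shiftB u) = M u) ∧
    (∀ c : ℂ, M (const ℕ c) = c) := by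
  obtain ⟨g, hgle, hgc⟩ := exists_g
  have gabs : ∀ x, |g x| ≤ ‖x‖ := by
    intro x
    rw [abs_le]
    constructor
    · have h1 : g (-x) ≤ pB (-x) := hgle (-x)
      have h2 : pB (-x) ≤ ‖-x‖ := pB_le_norm (-x)
      rw [map_neg, norm_neg] at *
      linarith
    · exact (hgle x).trans (pB_le_norm x)
  have shiftB_neg : ∀ x : ℕ →ᵇ ℝ, shiftB (-x) = -(shiftB x) := by
    intro x; ext n; simp
  have gshift : ∀ x, g (shiftB x) = g x := by
    intro x
    have h1 : g (shiftB x - x) ≤ 0 := (hgle _).trans (pB_shift_sub x)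
    have h2 : g (shiftB (-x) - (-x)) ≤ 0 := (hgle _).trans (pB_shift_sub (-x))
    rw [shiftB_neg, map_sub, map_neg, map_neg] at h2
    rw [map_sub] at h1
    linarith
  set M : (ℕ →ᵇ ℂ) → ℂ := fun u => (g (reB u) : ℂ) + g (imB u) * Complex.I with hM
  have reB_add : ∀ u v, reB (u + v) = reB u + reB v := by
    intro u v; ext n; simp
  have imB_add : ∀ u v, imB (u + v) = imB u + imB v := by
    intro u v; ext n; simp
  have Madd : ∀ u v, M (u + v) = M u + M v := by
    intro u v
    rw [hM]
    simp only [reB_add, imB_add, map_add]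
    push_cast
    ring
  have Msmul : ∀ (c : ℂ) u, M (c • u) = c * M u := by
    intro c u
    have hre : reB (c • u) = c.re • reB u - c.im • imB u := by
      ext n; simp [Complex.mul_re, mul_comm]
    have him : imB (c • u) = c.re • imB u + c.im • reB u := by
      ext n; simp [Complex.mul_im, mul_comm]
    rw [hM]
    simp only [hre, him, map_add, map_sub, map_smul, smul_eq_mul]
    apply Complex.ext <;> simp [Complex.mul_re, Complex.mul_im]
  have Mre : ∀ u, (M u).re = g (reB u) := by
    intro u; rw [hM]; simp
  have Mre_le : ∀ u, (M u).re ≤ ‖u‖ := by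
    intro u
    rw [Mre]
    exact (le_abs_self _).trans ((gabs _).trans (norm_reB_le u))
  have Mnorm : ∀ u, ‖M u‖ ≤ ‖u‖ := by
    intro u
    by_cases h : M u = 0
    · simp [h]
    · set c : ℂ := (‖M u‖ : ℂ) / M u with hc
      have hcu : M (c • u) = (‖M u‖ : ℂ) := by
        rw [Msmul, hc, div_mul_cancel₀ _ h]
      have hnc : ‖c‖ = 1 := by
        rw [hc, norm_div, Complex.norm_real, norm_norm, div_self (norm_ne_zero_iff.2 h)]
      have := Mre_le (c • u)
      rw [hcu, Complex.ofReal_re, norm_smul, hnc, one_mul] at this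
      exact this
  have Mshift : ∀ u, M (shiftB u) = M u := by
    intro u
    have h1 : reB (shiftB u) = shiftB (reB u) := by ext n; simp
    have h2 : imB (shiftB u) = shiftB (imB u) := by ext n; simp
    rw [hM]
    simp only [h1, h2, gshift]
  have Mconst : ∀ c : ℂ, M (const ℕ c) = c := by
    intro c
    have h1 : reB (const ℕ c) = c.re • 1 := by ext n; simp
    have h2 : imB (const ℕ c) = c.im • 1 := by ext n; simp
    rw [hM]
    simp only [h1, h2, hgc]
    exact Complex.re_add_im c
  exact ⟨M, Madd, Msmul, Mnorm, Mshift, Mconst⟩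


/-- a fixed Banach limit -/
def BLim : (ℕ →ᵇ ℂ) → ℂ := Classical.choose exists_mean

lemma BLim_add (u v : ℕ →ᵇ ℂ) : BLim (u + v) = BLim u + BLim v :=
  (Classical.choose_spec exists_mean).1 u v
lemma BLim_smul (c : ℂ) (u : ℕ →ᵇ ℂ) : BLim (c • u) = c * BLim u :=
  (Classical.choose_spec exists_mean).2.1 c u
lemma BLim_norm (u : ℕ →ᵇ ℂ) : ‖BLim u‖ ≤ ‖u‖ :=
  (Classical.choose_spec exists_mean).2.2.1 u
lemma BLim_shift (u : ℕ →ᵇ ℂ) : BLim (shiftB u) = BLim u :=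
  (Classical.choose_spec exists_mean).2.2.2.1 u
lemma BLim_const (c : ℂ) : BLim (const ℕ c) = c :=
  (Classical.choose_spec exists_mean).2.2.2.2 c

section Hilbert

open ContinuousLinearMap InnerProductSpace

variable {H : Type*} [NormedAddCommGroup H] [InnerProductSpace ℂ H] [CompleteSpace H]

local notation "⟪" x ", " y "⟫" => @inner ℂ _ _ x y

def Aop (T C : H →L[ℂ] H) (n : ℕ) : H →L[ℂ] H := (adjoint T) ^ n * C * T ^ n

lemma Aop_zero (T C : H →L[ℂ] H) : Aop T C 0 = C := by
  simp [Aop]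

lemma Aop_succ (T C : H →L[ℂ] H) (n : ℕ) :
    Aop T C (n + 1) = adjoint T * Aop T C n * T := by
  rw [Aop, Aop, pow_succ T n, pow_succ' (adjoint T) n]
  simp only [mul_assoc]

lemma norm_pow_le_one {T : H →L[ℂ] H} (hT : ‖T‖ ≤ 1) (n : ℕ) : ‖T ^ n‖ ≤ 1 := by
  induction n with
  | zero => simpa [ContinuousLinearMap.one_def] using ContinuousLinearMap.norm_id_le
  | succ n ih =>
      rw [pow_succ]
      calc ‖T ^ n * T‖ ≤ ‖T ^ n‖ * ‖T‖ := norm_mul_le _ _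
        _ ≤ 1 * 1 := mul_le_mul ih hT (norm_nonneg T) zero_le_one
        _ = 1 := one_mul 1

lemma norm_Aop_le {T : H →L[ℂ] H} (hT : ‖T‖ ≤ 1) (C : H →L[ℂ] H) (n : ℕ) :
    ‖Aop T C n‖ ≤ ‖C‖ := by
  have h1 : ‖(adjoint T) ^ n‖ ≤ 1 := norm_pow_le_one (by rw [ContinuousLinearMap.adjoint.norm_map T]; exact hT) n
  have h2 : ‖T ^ n‖ ≤ 1 := norm_pow_le_one hT n
  calc ‖(adjoint T) ^ n * C * T ^ n‖ ≤ ‖(adjoint T) ^ n * C‖ * ‖T ^ n‖ := norm_mul_le _ _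
    _ ≤ (‖(adjoint T) ^ n‖ * ‖C‖) * ‖T ^ n‖ :=
        mul_le_mul_of_nonneg_right (norm_mul_le _ _) (norm_nonneg _)
    _ ≤ (1 * ‖C‖) * 1 := by
        apply mul_le_mul ?_ h2 (norm_nonneg _) (by positivity)
        exact mul_le_mul_of_nonneg_right h1 (norm_nonneg _)
    _ = ‖C‖ := by ring

def seqb (T : H →L[ℂ] H) (hT : ‖T‖ ≤ 1) (C : H →L[ℂ] H) (y x : H) : ℕ →ᵇ ℂ :=
  ofNormedAddCommGroup (fun n => ⟪(Aop T C n) y, x⟫) continuous_of_discreteTopology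
    (‖C‖ * ‖y‖ * ‖x‖)
    (fun n => by
      calc ‖⟪(Aop T C n) y, x⟫‖ ≤ ‖(Aop T C n) y‖ * ‖x‖ := norm_inner_le_norm _ _
        _ ≤ (‖Aop T C n‖ * ‖y‖) * ‖x‖ :=
            mul_le_mul_of_nonneg_right ((Aop T C n).le_opNorm y) (norm_nonneg x)
        _ ≤ (‖C‖ * ‖y‖) * ‖x‖ := by
            apply mul_le_mul_of_nonneg_right ?_ (norm_nonneg x)
            exact mul_le_mul_of_nonneg_right (norm_Aop_le hT C n) (norm_nonneg y))

@[simp] lemma seqb_apply (T : H →L[ℂ] H) (hT : ‖T‖ ≤ 1) (C : H →L[ℂ] H) (y x : H) (n : ℕ) :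
    seqb T hT C y x n = ⟪(Aop T C n) y, x⟫ := rfl

lemma norm_seqb_le (T : H →L[ℂ] H) (hT : ‖T‖ ≤ 1) (C : H →L[ℂ] H) (y x : H) :
    ‖seqb T hT C y x‖ ≤ ‖C‖ * ‖y‖ * ‖x‖ :=
  norm_ofNormedAddCommGroup_le _ (by positivity) _

def Phi (T : H →L[ℂ] H) (hT : ‖T‖ ≤ 1) (C : H →L[ℂ] H) (y : H) : H →L[ℂ] ℂ :=
  LinearMap.mkContinuous
    { toFun := fun x => BLim (seqb T hT C y x)
      map_add' := by
        intro x x'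
        rw [← BLim_add]
        congr 1
        refine BoundedContinuousFunction.ext fun n => ?_
        simp [inner_add_right]
      map_smul' := by
        intro c x
        have h : seqb T hT C y (c • x) = c • seqb T hT C y x := by
          refine BoundedContinuousFunction.ext fun n => ?_
          simp [inner_smul_right]
        rw [h, BLim_smul]
        rfl }
    (‖C‖ * ‖y‖)
    (fun x => by
      refine (BLim_norm _).trans ?_
      simpa [mul_assoc] using norm_seqb_le T hT C y x)

@[simp] lemma Phi_apply (T : H →L[ℂ] H) (hT : ‖T‖ ≤ 1) (C : H →L[ℂ] H) (y x : H) :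
    Phi T hT C y x = BLim (seqb T hT C y x) := rfl

lemma norm_Phi_le (T : H →L[ℂ] H) (hT : ‖T‖ ≤ 1) (C : H →L[ℂ] H) (y : H) :
    ‖Phi T hT C y‖ ≤ ‖C‖ * ‖y‖ :=
  LinearMap.mkContinuous_norm_le _ (by positivity) _


def Dopl (T : H →L[ℂ] H) (hT : ‖T‖ ≤ 1) (C : H →L[ℂ] H) : H →ₗ[ℂ] H where
  toFun y := (toDual ℂ H).symm (Phi T hT C y)
  map_add' := by
    intro y y'
    rw [← map_add]
    congr 1
    ext x
    simp only [Phi_apply, ContinuousLinearMap.add_apply]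
    rw [← BLim_add]
    congr 1
    refine BoundedContinuousFunction.ext fun n => ?_
    simp [inner_add_left]
  map_smul' := by
    intro c y
    have h : Phi T hT C (c • y) = (starRingEnd ℂ c) • Phi T hT C y := by
      ext x
      simp only [Phi_apply, ContinuousLinearMap.smul_apply]
      have h2 : seqb T hT C (c • y) x = (starRingEnd ℂ c) • seqb T hT C y x := by
        refine BoundedContinuousFunction.ext fun n => ?_
        simp [inner_smul_left, mul_comm]
      rw [h2, BLim_smul]
      rfl
    rw [h, LinearIsometryEquiv.map_smulₛₗ]
    simp

lemma inner_Dopl (T : H →L[ℂ] H) (hT : ‖T‖ ≤ 1) (C : H →L[ℂ] H) (y x : H) :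
    ⟪Dopl T hT C y, x⟫ = BLim (seqb T hT C y x) :=
  toDual_symm_apply

lemma norm_Dopl_le (T : H →L[ℂ] H) (hT : ‖T‖ ≤ 1) (C : H →L[ℂ] H) (y : H) :
    ‖Dopl T hT C y‖ ≤ ‖C‖ * ‖y‖ := by
  have h : ‖(toDual ℂ H).symm (Phi T hT C y)‖ = ‖Phi T hT C y‖ :=
    LinearIsometryEquiv.norm_map _ _
  exact h.trans_le (norm_Phi_le T hT C y)

def Dop (T : H →L[ℂ] H) (hT : ‖T‖ ≤ 1) (C : H →L[ℂ] H) : H →L[ℂ] H :=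
  LinearMap.mkContinuous (Dopl T hT C) ‖C‖ (fun y => norm_Dopl_le T hT C y)

lemma inner_Dop (T : H →L[ℂ] H) (hT : ‖T‖ ≤ 1) (C : H →L[ℂ] H) (y x : H) :
    ⟪Dop T hT C y, x⟫ = BLim (seqb T hT C y x) :=
  inner_Dopl T hT C y x

lemma norm_Dop_le (T : H →L[ℂ] H) (hT : ‖T‖ ≤ 1) (C : H →L[ℂ] H) :
    ‖Dop T hT C‖ ≤ ‖C‖ :=
  LinearMap.mkContinuous_norm_le _ (norm_nonneg C) _

lemma Dop_fixed (T : H →L[ℂ] H) (hT : ‖T‖ ≤ 1) (C : H →L[ℂ] H) :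
    (adjoint T).comp ((Dop T hT C).comp T) = Dop T hT C := by
  ext y
  refine ext_inner_right ℂ fun x => ?_
  have h1 : ((adjoint T).comp ((Dop T hT C).comp T)) y = adjoint T (Dop T hT C (T y)) := rfl
  rw [h1, adjoint_inner_left, inner_Dop, inner_Dop]
  have h2 : seqb T hT C (T y) (T x) = shiftB (seqb T hT C y x) := by
    refine BoundedContinuousFunction.ext fun n => ?_
    rw [shiftB_apply, seqb_apply, seqb_apply, Aop_succ T C n,
      show (adjoint T * Aop T C n * T) y = adjoint T (Aop T C n (T y)) from rfl,
      adjoint_inner_left]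
  rw [h2, BLim_shift]

lemma Dop_of_fixed (T : H →L[ℂ] H) (hT : ‖T‖ ≤ 1) (C : H →L[ℂ] H)
    (hC : (adjoint T).comp (C.comp T) = C) : Dop T hT C = C := by
  have hA : ∀ n, Aop T C n = C := by
    intro n
    induction n with
    | zero => exact Aop_zero T C
    | succ n ih =>
        rw [Aop_succ, ih]
        calc adjoint T * C * T = (adjoint T).comp (C.comp T) := by
              rw [mul_def, mul_def]; rfl
          _ = C := hC
  ext y
  refine ext_inner_right ℂ fun x => ?_
  rw [inner_Dop]
  have h : seqb T hT C y x = const ℕ ⟪C y, x⟫ := by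
    refine BoundedContinuousFunction.ext fun n => ?_
    rw [seqb_apply, hA n]
    rfl
  rw [h, BLim_const]

def Pl (T : H →L[ℂ] H) (hT : ‖T‖ ≤ 1) : (H →L[ℂ] H) →ₗ[ℂ] (H →L[ℂ] H) where
  toFun C := Dop T hT C
  map_add' := by
    intro C C'
    ext y
    refine ext_inner_right ℂ fun x => ?_
    rw [ContinuousLinearMap.add_apply, inner_add_left, inner_Dop, inner_Dop, inner_Dop,
      ← BLim_add]
    congr 1
    refine BoundedContinuousFunction.ext fun n => ?_
    have hA : Aop T (C + C') n = Aop T C n + Aop T C' n := by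
      simp [Aop, mul_add, add_mul]
    simp [hA, inner_add_left]
  map_smul' := by
    intro c C
    ext y
    refine ext_inner_right ℂ fun x => ?_
    dsimp only [RingHom.id_apply]
    rw [ContinuousLinearMap.smul_apply, inner_smul_left, inner_Dop, inner_Dop]
    have hs : seqb T hT (c • C) y x = (starRingEnd ℂ c) • seqb T hT C y x := by
      refine BoundedContinuousFunction.ext fun n => ?_
      have hA : Aop T (c • C) n = c • Aop T C n := by
        simp [Aop, smul_mul_assoc, mul_smul_comm]
      simp [hA, inner_smul_left, mul_comm]
    rw [hs, BLim_smul]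

end Hilbert

end Stmt6Aux


open ContinuousLinearMap in
/-- For a contraction `T` on a Hilbert space there is a contractive idempotent
on `B(H)` whose range is `{C : T* C T = C}`. -/
theorem stmt_6 {H : Type*}
    [NormedAddCommGroup H] [InnerProductSpace ℂ H] [CompleteSpace H]
    (T : H →L[ℂ] H) (hT : ‖T‖ ≤ 1) :
    ∃ P : (H →L[ℂ] H) →L[ℂ] (H →L[ℂ] H),
      ‖P‖ ≤ 1 ∧ P.comp P = P ∧
      Set.range ⇑P =
        {C : H →L[ℂ] H | (adjoint T).comp (C.comp T) = C} := by
  classical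
  set P : (H →L[ℂ] H) →L[ℂ] (H →L[ℂ] H) :=
    LinearMap.mkContinuous (Stmt6Aux.Pl T hT) 1
      (fun C => by show ‖Stmt6Aux.Dop T hT C‖ ≤ 1 * ‖C‖; simpa using Stmt6Aux.norm_Dop_le T hT C) with hP
  have hPC : ∀ C, P C = Stmt6Aux.Dop T hT C := fun C => rfl
  refine ⟨P, ?_, ?_, ?_⟩
  · exact LinearMap.mkContinuous_norm_le _ zero_le_one _
  · refine ContinuousLinearMap.ext fun C => ?_
    show P (P C) = P C
    rw [hPC C, hPC (Stmt6Aux.Dop T hT C)]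
    exact Stmt6Aux.Dop_of_fixed T hT _ (Stmt6Aux.Dop_fixed T hT C)
  · ext C
    constructor
    · rintro ⟨B, rfl⟩
      show (adjoint T).comp ((P B).comp T) = P B
      rw [hPC B]
      exact Stmt6Aux.Dop_fixed T hT B
    · intro hC
      exact ⟨C, by rw [hPC C]; exact Stmt6Aux.Dop_of_fixed T hT C hC⟩
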